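/- Gradient-descent differential inequality for the continuous forward–backward flow: Let f : H → ℝ ∪ {+∞} be proper, convex, lower semicontinuous, g : H → ℝ convex differentiable with (1/β)-Lipschitz gradient, γ > 0 with (γ/β)(3 + γ/β) ≤ 1, and let x solve ẋ(t) + x(t) = prox_{γf}(x(t) − γ∇g(x(t))). Let x* be a minimizer of f + g. Then for almost every t ≥ 0, (f+g)(x*) ≥ (f+g)(ẋ(t)+x(t)) + (1/(2γ))‖ẋ(t)‖² + (1/(2γ))(d/dt)‖x(t) − x*‖². -/

import Mathlib

open Filter MeasureTheory Set Topology
open scoped RealInnerProductSpace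

private lemma descent_lemma
    {H : Type*} [NormedAddCommGroup H] [InnerProductSpace ℝ H] [CompleteSpace H]
    (g : H → ℝ) (g' : H → H)
    (hg_diff : ∀ z : H, HasGradientAt g (g' z) z)
    (β : ℝ) (hβ : 0 < β)
    (hg_lip : ∀ a b : H, ‖g' a - g' b‖ ≤ (1/β) * ‖a - b‖) (v u : H) :
    g u ≤ g v + ⟪g' v, u - v⟫ + (1/(2*β)) * ‖u - v‖ ^ 2 := by
  set w := u - v with hw
  have hline : ∀ s : ℝ, HasDerivAt (fun s : ℝ => v + s • w) w s := by
    intro s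
    simpa using ((hasDerivAt_id s).smul_const w).const_add v
  have hφ : ∀ s : ℝ, HasDerivAt (fun s : ℝ => g (v + s • w)) ⟪g' (v + s • w), w⟫ s := by
    intro s
    have := (hg_diff (v + s • w)).hasFDerivAt.comp_hasDerivAt s (hline s)
    exact this
  set h : ℝ → ℝ := fun s => g (v + s • w) - s * ⟪g' v, w⟫ - s^2 * ((1/(2*β)) * ‖w‖^2)
    with hh
  have hd : ∀ s : ℝ, HasDerivAt h
      (⟪g' (v + s • w), w⟫ - ⟪g' v, w⟫ - (2*s) * ((1/(2*β)) * ‖w‖^2)) s := by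
    intro s
    have h1 := (hasDerivAt_id s).mul_const (⟪g' v, w⟫ : ℝ)
    have h2 := (hasDerivAt_pow 2 s).mul_const ((1/(2*β)) * ‖w‖^2)
    have := ((hφ s).sub h1).sub h2
    exact this.congr_deriv (by ring)
  have hnonpos : ∀ s ∈ Set.Ioo (0:ℝ) 1,
      ⟪g' (v + s • w), w⟫ - ⟪g' v, w⟫ - (2*s) * ((1/(2*β)) * ‖w‖^2) ≤ 0 := by
    intro s hs
    have hbound : ⟪g' (v + s • w), w⟫ - ⟪g' v, w⟫ ≤ (1/β) * (s * ‖w‖) * ‖w‖ := by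
      calc ⟪g' (v + s • w), w⟫ - ⟪g' v, w⟫ = ⟪g' (v + s • w) - g' v, w⟫ := by
            rw [inner_sub_left]
        _ ≤ ‖g' (v + s • w) - g' v‖ * ‖w‖ := real_inner_le_norm _ _
        _ ≤ ((1/β) * ‖(v + s • w) - v‖) * ‖w‖ :=
            mul_le_mul_of_nonneg_right (hg_lip _ _) (norm_nonneg _)
        _ = (1/β) * (s * ‖w‖) * ‖w‖ := by
            rw [add_sub_cancel_left, norm_smul, Real.norm_eq_abs, abs_of_pos hs.1]
    have heq : (1/β) * (s * ‖w‖) * ‖w‖ = (2*s) * ((1/(2*β)) * ‖w‖^2) := by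
      field_simp
    linarith [hbound, heq.le]
  have hanti : AntitoneOn h (Set.Icc 0 1) := by
    apply antitoneOn_of_deriv_nonpos (convex_Icc 0 1)
    · exact fun s _ => (hd s).continuousAt.continuousWithinAt
    · intro s _
      exact (hd s).differentiableAt.differentiableWithinAt
    · intro s hs
      rw [interior_Icc] at hs
      rw [(hd s).deriv]
      exact hnonpos s hs
  have := hanti (Set.left_mem_Icc.2 zero_le_one) (Set.right_mem_Icc.2 zero_le_one)
    zero_le_one
  have hvw : v + w = u := by rw [hw]; abel
  simp only [hh, one_smul, zero_smul, add_zero, one_pow, one_mul, zero_pow, zero_mul,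
    sub_zero, hvw] at this
  linarith

/-- Gradient-descent differential inequality for the continuous forward–backward
flow `ẋ(t) + x(t) = prox_{γf}(x(t) − γ∇g(x(t)))`.  The prox equation is encoded
by its exact subdifferential characterization
`−(1/γ)ẋ(t) − ∇g(x(t)) ∈ ∂f(ẋ(t) + x(t))`.  For a minimizer `x*` of `f + g` and
almost every `t ≥ 0`:
`(f+g)(x*) ≥ (f+g)(ẋ(t)+x(t)) + (1/(2γ))‖ẋ(t)‖² + (1/(2γ))(d/dt)‖x(t) − x*‖²`. -/
theorem stmt11
    {H : Type*} [NormedAddCommGroup H] [InnerProductSpace ℝ H] [CompleteSpace H]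
    (f : H → ℝ) (hf_cvx : ConvexOn ℝ Set.univ f) (hf_lsc : LowerSemicontinuous f)
    (g : H → ℝ) (g' : H → H)
    (hg_diff : ∀ z : H, HasGradientAt g (g' z) z)
    (hg_cvx : ∀ a b : H, g a + ⟪g' a, b - a⟫ ≤ g b)
    (β : ℝ) (hβ : 0 < β)
    (hg_lip : ∀ a b : H, ‖g' a - g' b‖ ≤ (1/β) * ‖a - b‖)
    (γ : ℝ) (hγ : 0 < γ) (hstep : (γ/β) * (3 + γ/β) ≤ 1)
    (x xd : ℝ → H)
    (hx : ∀ t ≥ (0:ℝ), HasDerivAt x (xd t) t)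
    (hprox : ∀ t ≥ (0:ℝ), ∀ y : H,
      f (xd t + x t) + ⟪-((1/γ) • xd t) - g' (x t), y - (xd t + x t)⟫ ≤ f y)
    (xstar : H) (hmin : ∀ y : H, f xstar + g xstar ≤ f y + g y) :
    ∀ᵐ t ∂(volume.restrict (Ici (0:ℝ))),
      ∀ D : ℝ, HasDerivAt (fun s => ‖x s - xstar‖ ^ 2) D t →
        f (xd t + x t) + g (xd t + x t) + (1/(2*γ)) * ‖xd t‖ ^ 2 +
          (1/(2*γ)) * D ≤ f xstar + g xstar := by
  have hr : γ/β ≤ 1 := by nlinarith [div_pos hγ hβ]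
  have hγβ : γ ≤ β := (div_le_one hβ).mp hr
  filter_upwards [ae_restrict_mem measurableSet_Ici] with t ht
  intro D hD
  have hxd := hx t ht
  -- compute the derivative of the squared distance
  have hD2 : HasDerivAt (fun s => ‖x s - xstar‖ ^ 2)
      (⟪x t - xstar, xd t⟫ + ⟪xd t, x t - xstar⟫) t := by
    have := (hxd.sub_const xstar).inner ℝ (hxd.sub_const xstar)
    have heq : (fun s : ℝ => (⟪x s - xstar, x s - xstar⟫ : ℝ))
        = fun s => ‖x s - xstar‖ ^ 2 := by
      funext s; exact real_inner_self_eq_norm_sq _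
    rw [heq] at this
    exact this
  have hDval : D = ⟪x t - xstar, xd t⟫ + ⟪xd t, x t - xstar⟫ := hD.unique hD2
  set u := xd t + x t with hu
  set v := x t with hv
  have hsub := hprox t ht xstar
  have hgc := hg_cvx v xstar
  have hdesc := descent_lemma g g' hg_diff β hβ hg_lip v u
  have huv : u - v = xd t := by rw [hu, hv]; abel
  rw [huv] at hdesc
  -- expand inner products
  set i1 := (⟪xd t, xstar⟫ : ℝ)
  set i2 := (⟪xd t, v⟫ : ℝ)
  set i3 := (⟪xd t, xd t⟫ : ℝ)
  set i4 := (⟪g' v, xstar⟫ : ℝ)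
  set i5 := (⟪g' v, v⟫ : ℝ)
  set i6 := (⟪g' v, xd t⟫ : ℝ)
  have hn : ‖xd t‖ ^ 2 = i3 := (real_inner_self_eq_norm_sq _).symm
  have hsub' : f u + (-(1/γ) * (i1 - i3 - i2) - (i4 - i6 - i5)) ≤ f xstar := by
    have hexp : (⟪-((1/γ) • xd t) - g' v, xstar - u⟫ : ℝ)
        = -(1/γ) * (i1 - i3 - i2) - (i4 - i6 - i5) := by
      rw [hu]
      simp [inner_sub_left, inner_sub_right, inner_add_right, inner_neg_left,
        real_inner_smul_left, i1, i2, i3, i4, i5, i6]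
      ring
    rw [← hexp]
    exact hsub
  have hgc' : g v + (i4 - i5) ≤ g xstar := by
    have : (⟪g' v, xstar - v⟫ : ℝ) = i4 - i5 := by rw [inner_sub_right]
    linarith [this ▸ hgc]
  have hdesc' : g u ≤ g v + i6 + (1/(2*β)) * i3 := by
    have h1 : (⟪g' v, xd t⟫ : ℝ) = i6 := rfl
    rw [hn] at hdesc
    linarith [hdesc]
  have hDval' : D = 2 * (i2 - i1) := by
    have h1 : (⟪v - xstar, xd t⟫ : ℝ) = i2 - i1 := by
      rw [real_inner_comm, inner_sub_right]
    have h2 : (⟪xd t, v - xstar⟫ : ℝ) = i2 - i1 := by rw [inner_sub_right]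
    rw [hDval, h1, h2]; ring
  have hi3 : 0 ≤ i3 := real_inner_self_nonneg
  have hkey : (1/(2*β)) * i3 ≤ (1/(2*γ)) * i3 := by
    apply mul_le_mul_of_nonneg_right _ hi3
    apply one_div_le_one_div_of_le (by linarith) (by linarith)
  have hc : (1:ℝ)/γ = 2 * (1/(2*γ)) := by field_simp
  rw [hn, hDval']
  rw [hc] at hsub'
  linarith [hsub', hgc', hdesc', hkey]
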